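/- Let n ≥ 2, X with xᵢ ≥ 0, and weight vectors α, β with positive entries summing to 1. Then min_k(α_k/β_k) · max{1/(1−α_min), 1/(1−β_min)} · Var_β(X^{1/2}) ≤ E_α X − Π_α X. -/

import Mathlib

open Finset

/-- Core refinement of AM-GM: the gap dominates `1/(1-t)` times the variance of the
square roots, for any `t` below all weights with `2*t ≤ 1`. -/
lemma amgm_core (n : ℕ) (x α : Fin n → ℝ) (hx : ∀ i, 0 ≤ x i)
    (hα : ∀ i, 0 < α i) (hαs : ∑ i, α i = 1) (t : ℝ) (ht0 : 0 ≤ t)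
    (ht : ∀ i, t ≤ α i) (ht2 : 2 * t ≤ 1) :
    ∑ i, α i * x i - (∑ i, α i * Real.sqrt (x i)) ^ 2 ≤
      (1 - t) * (∑ i, α i * x i - ∏ i, x i ^ α i) := by
  set y : Fin n → ℝ := fun i => Real.sqrt (x i) with hy_def
  have hy : ∀ i, 0 ≤ y i := fun i => Real.sqrt_nonneg _
  have hxy : ∀ i, x i = y i * y i := fun i => (Real.mul_self_sqrt (hx i)).symm
  have h1t : (0:ℝ) < 1 - t := by linarith
  set A : ℝ := ∑ i, α i * y i with hA_def
  have hkey : (1 - t) * (∏ i, x i ^ α i) ≤ ∑ i, α i * (y i * (A - t * y i)) := by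
    have hAyi : ∀ i : Fin n, α i * y i ≤ A := by
      intro i
      exact Finset.single_le_sum (fun j _ => mul_nonneg (hα j).le (hy j)) (mem_univ i)
    have hAt : ∀ i : Fin n, 0 ≤ A - t * y i := by
      intro i
      have : t * y i ≤ α i * y i := mul_le_mul_of_nonneg_right (ht i) (hy i)
      linarith [hAyi i]
    by_cases hex : ∃ j, x j = 0
    · obtain ⟨j, hj⟩ := hex
      have hP : (∏ i, x i ^ α i) = 0 := by
        apply Finset.prod_eq_zero (mem_univ j)
        rw [hj]
        exact Real.zero_rpow (hα j).ne'
      rw [hP, mul_zero]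
      exact Finset.sum_nonneg fun i _ =>
        mul_nonneg (hα i).le (mul_nonneg (hy i) (hAt i))
    · push_neg at hex
      have hxp : ∀ j, 0 < x j := fun j => lt_of_le_of_ne (hx j) (Ne.symm (hex j))
      have hyp : ∀ j, 0 < y j := fun j => Real.sqrt_pos.2 (hxp j)
      set w : Fin n → Fin n → ℝ :=
        fun i j => (α j - (if i = j then t else 0)) / (1 - t) with hw_def
      set e : Fin n → Fin n → ℝ :=
        fun i j => w i j + (if i = j then 1 else 0) with he_def
      have hw_nonneg : ∀ i j, 0 ≤ w i j := by
        intro i j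
        apply div_nonneg _ h1t.le
        by_cases h : i = j <;> simp [h] <;> linarith [ht j, hα j]
      have hw_sum : ∀ i, ∑ j, w i j = 1 := by
        intro i
        simp only [hw_def]
        rw [← Finset.sum_div, Finset.sum_sub_distrib, hαs,
          Finset.sum_ite_eq (Finset.univ) i (fun _ => t)]
        simp [h1t.ne']
      -- per-index AM-GM
      have step1 : ∀ i, (1 - t) * ∏ j, y j ^ w i j ≤ A - t * y i := by
        intro i
        have hgm : ∏ j, y j ^ w i j ≤ ∑ j, w i j * y j :=
          Real.geom_mean_le_arith_mean_weighted univ (w i) y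
            (fun j _ => hw_nonneg i j) (hw_sum i) (fun j _ => hy j)
        have hterm : ∀ j, w i j * y j * (1 - t) =
            α j * y j - (if i = j then t * y j else 0) := by
          intro j
          simp only [hw_def]
          by_cases h : i = j <;> simp only [h, if_true, if_false, eq_self_iff_true] <;> field_simp <;> ring
        have hsum : (∑ j, w i j * y j) * (1 - t) = A - t * y i := by
          rw [Finset.sum_mul, Finset.sum_congr rfl fun j _ => hterm j,
            Finset.sum_sub_distrib, Finset.sum_ite_eq (Finset.univ) i (fun j => t * y j)]
          simp [hA_def]
        calc (1 - t) * ∏ j, y j ^ w i j ≤ (1 - t) * ∑ j, w i j * y j :=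
              mul_le_mul_of_nonneg_left hgm h1t.le
          _ = A - t * y i := by rw [← hsum]; ring
      -- rewrite y i * ∏ as ∏ with exponents e
      have hg_eq : ∀ i, y i * ∏ j, y j ^ w i j = ∏ j, y j ^ e i j := by
        intro i
        have h1 : ∀ j, y j ^ e i j = y j ^ w i j * y j ^ (if i = j then (1:ℝ) else 0) := by
          intro j
          simp only [he_def]
          exact Real.rpow_add (hyp j) _ _
        rw [Finset.prod_congr rfl (fun j _ => h1 j), Finset.prod_mul_distrib]
        have h2 : ∏ j, y j ^ (if i = j then (1:ℝ) else 0) = y i := by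
          rw [Finset.prod_congr rfl (fun j _ => by
            rw [show y j ^ (if i = j then (1:ℝ) else 0) = if i = j then y j else 1 by
              by_cases h : i = j <;> simp [h]])]
          simp
        rw [h2]
        ring
      -- second AM-GM
      set g : Fin n → ℝ := fun i => ∏ j, y j ^ e i j with hg_def
      have hg_nonneg : ∀ i, 0 ≤ g i := fun i =>
        Finset.prod_nonneg fun j _ => Real.rpow_nonneg (hy j) _
      have hgm2 : ∏ i, g i ^ α i ≤ ∑ i, α i * g i :=
        Real.geom_mean_le_arith_mean_weighted univ α g
          (fun i _ => (hα i).le) hαs (fun i _ => hg_nonneg i)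
      have hprod : ∏ i, g i ^ α i = ∏ j, x j ^ α j := by
        have h1 : ∀ i, g i ^ α i = ∏ j, y j ^ (e i j * α i) := by
          intro i
          simp only [hg_def]
          rw [← Real.finset_prod_rpow _ _ (fun j _ => Real.rpow_nonneg (hy j) _)]
          apply Finset.prod_congr rfl
          intro j _
          rw [← Real.rpow_mul (hy j)]
        rw [Finset.prod_congr rfl (fun i _ => h1 i), Finset.prod_comm]
        apply Finset.prod_congr rfl
        intro j _
        rw [← Real.rpow_sum_of_pos (hyp j)]
        have hsum : ∑ i, e i j * α i = 2 * α j := by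
          have hterm : ∀ i, e i j * α i =
              (α j * α i + (if i = j then (1 - 2*t) * α i else 0)) / (1 - t) := by
            intro i
            simp only [he_def, hw_def]
            by_cases h : i = j <;> simp only [h, if_true, if_false, eq_self_iff_true] <;> field_simp <;> ring
          rw [Finset.sum_congr rfl fun i _ => hterm i, ← Finset.sum_div,
            Finset.sum_add_distrib, ← Finset.mul_sum, hαs,
            Finset.sum_ite_eq' (Finset.univ) j (fun i => (1 - 2*t) * α i)]
          simp only [mem_univ, if_true, mul_one]
          field_simp
          ring
        rw [hsum, Real.rpow_mul (hy j), Real.rpow_two, sq, ← hxy j]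
      calc (1 - t) * ∏ i, x i ^ α i = (1 - t) * ∏ i, g i ^ α i := by rw [hprod]
        _ ≤ (1 - t) * ∑ i, α i * g i := mul_le_mul_of_nonneg_left hgm2 h1t.le
        _ = ∑ i, α i * ((1 - t) * g i) := by
            rw [Finset.mul_sum]
            exact Finset.sum_congr rfl fun i _ => by ring
        _ ≤ ∑ i, α i * (y i * (A - t * y i)) := by
            apply Finset.sum_le_sum
            intro i _
            apply mul_le_mul_of_nonneg_left _ (hα i).le
            have hgi : g i = ∏ j, y j ^ e i j := by simp only [hg_def]
            calc (1 - t) * g i = y i * ((1 - t) * ∏ j, y j ^ w i j) := by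
                  rw [hgi, ← hg_eq i]; ring
              _ ≤ y i * (A - t * y i) :=
                  mul_le_mul_of_nonneg_left (step1 i) (hy i)
  have hA2 : A ^ 2 - t * ∑ i, α i * x i = ∑ i, α i * (y i * (A - t * y i)) := by
    have h1 : A ^ 2 = ∑ i, α i * y i * A := by rw [sq, ← Finset.sum_mul]
    have h2 : t * ∑ i, α i * x i = ∑ i, α i * (t * y i * y i) := by
      rw [Finset.mul_sum]
      exact Finset.sum_congr rfl fun i _ => by rw [hxy i]; ring
    rw [h1, h2, ← Finset.sum_sub_distrib]
    exact Finset.sum_congr rfl fun i _ => by ring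
  nlinarith [hkey, hA2]

open Finset

lemma amgm_decomp (n : ℕ) (x α β : Fin n → ℝ) (hx : ∀ i, 0 ≤ x i)
    (hα : ∀ i, 0 < α i) (hβ : ∀ i, 0 < β i)
    (hαs : ∑ i, α i = 1) (hβs : ∑ i, β i = 1)
    (c : ℝ) (hc0 : 0 ≤ c) (hcb : ∀ i, c * β i ≤ α i) :
    c * (∑ i, β i * x i - ∏ i, x i ^ β i) ≤ ∑ i, α i * x i - ∏ i, x i ^ α i := by
  by_cases hex : ∃ j, x j = 0
  · obtain ⟨j, hj⟩ := hex
    have hPα : (∏ i, x i ^ α i) = 0 := by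
      apply Finset.prod_eq_zero (mem_univ j)
      rw [hj]; exact Real.zero_rpow (hα j).ne'
    have hPβ : (∏ i, x i ^ β i) = 0 := by
      apply Finset.prod_eq_zero (mem_univ j)
      rw [hj]; exact Real.zero_rpow (hβ j).ne'
    rw [hPα, hPβ]
    have : c * ∑ i, β i * x i ≤ ∑ i, α i * x i := by
      rw [Finset.mul_sum]
      apply Finset.sum_le_sum
      intro i _
      calc c * (β i * x i) = (c * β i) * x i := by ring
        _ ≤ α i * x i := mul_le_mul_of_nonneg_right (hcb i) (hx i)
    linarith
  · push_neg at hex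
    have hxp : ∀ j, 0 < x j := fun j => lt_of_le_of_ne (hx j) (Ne.symm (hex j))
    set Q : ℝ := ∏ i, x i ^ β i with hQ_def
    set W : Option (Fin n) → ℝ := fun o => o.elim c (fun i => α i - c * β i) with hW_def
    set Z : Option (Fin n) → ℝ := fun o => o.elim Q x with hZ_def
    have hW_nonneg : ∀ o, 0 ≤ W o := by
      rintro (_ | i)
      · exact hc0
      · simp only [hW_def, Option.elim]
        linarith [hcb i]
    have hW_sum : ∑ o, W o = 1 := by
      rw [Fintype.sum_option]
      simp only [hW_def, Option.elim]
      rw [Finset.sum_sub_distrib, hαs, ← Finset.mul_sum, hβs]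
      ring
    have hZ_nonneg : ∀ o, 0 ≤ Z o := by
      rintro (_ | i)
      · exact Finset.prod_nonneg fun i _ => Real.rpow_nonneg (hx i) _
      · exact hx i
    have hgm : ∏ o, Z o ^ W o ≤ ∑ o, W o * Z o :=
      Real.geom_mean_le_arith_mean_weighted univ W Z
        (fun o _ => hW_nonneg o) hW_sum (fun o _ => hZ_nonneg o)
    have hL : ∏ o, Z o ^ W o = ∏ i, x i ^ α i := by
      rw [Fintype.prod_option]
      simp only [hW_def, hZ_def, Option.elim]
      have h1 : Q ^ c = ∏ i, x i ^ (c * β i) := by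
        rw [hQ_def, ← Real.finset_prod_rpow _ _ (fun i _ => Real.rpow_nonneg (hx i) _)]
        apply Finset.prod_congr rfl
        intro i _
        rw [← Real.rpow_mul (hx i)]
        ring_nf
      rw [h1, ← Finset.prod_mul_distrib]
      apply Finset.prod_congr rfl
      intro i _
      rw [← Real.rpow_add (hxp i)]
      ring_nf
    have hR : ∑ o, W o * Z o = c * Q + (∑ i, α i * x i - c * ∑ i, β i * x i) := by
      rw [Fintype.sum_option]
      simp only [hW_def, hZ_def, Option.elim]
      rw [Finset.mul_sum]
      rw [show ∑ i, (α i - c * β i) * x i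
          = ∑ i, (α i * x i - c * (β i * x i)) from
        Finset.sum_congr rfl fun i _ => by ring, Finset.sum_sub_distrib]
    rw [hL, hR] at hgm
    linarith
theorem amgm_gap_mixed_lower_bound (n : ℕ) (hn : 2 ≤ n)
    (x α β : Fin n → ℝ) (hx : ∀ i, 0 ≤ x i)
    (hα : ∀ i, 0 < α i) (hαs : ∑ i, α i = 1)
    (hβ : ∀ i, 0 < β i) (hβs : ∑ i, β i = 1) :
    (⨅ k, α k / β k) * max (1 / (1 - ⨅ i, α i)) (1 / (1 - ⨅ i, β i)) *
        (∑ i, β i * x i - (∑ i, β i * Real.sqrt (x i)) ^ 2) ≤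
      ∑ i, α i * x i - ∏ i, x i ^ α i := by
  have hne : Nonempty (Fin n) := ⟨⟨0, by omega⟩⟩
  set a : ℝ := ⨅ i, α i with ha_def
  set b : ℝ := ⨅ i, β i with hb_def
  set c : ℝ := ⨅ k, α k / β k with hc_def
  have ha_le : ∀ i, a ≤ α i := fun i => ciInf_le (Finite.bddBelow_range α) i
  have hb_le : ∀ i, b ≤ β i := fun i => ciInf_le (Finite.bddBelow_range β) i
  have hc_le : ∀ k, c ≤ α k / β k := fun k =>
    ciInf_le (Finite.bddBelow_range fun k => α k / β k) k
  have ha0 : 0 ≤ a := le_ciInf fun i => (hα i).le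
  have hb0 : 0 ≤ b := le_ciInf fun i => (hβ i).le
  have hc0 : 0 ≤ c := le_ciInf fun k => div_nonneg (hα k).le (hβ k).le
  have hcb : ∀ i, c * β i ≤ α i := fun i =>
    (le_div_iff₀ (hβ i)).1 (hc_le i)
  -- two distinct indices
  have h01 : (⟨0, by omega⟩ : Fin n) ≠ ⟨1, by omega⟩ := by
    simp [Fin.ext_iff]
  have hpair : ∀ γ : Fin n → ℝ, (∀ i, 0 < γ i) → (∑ i, γ i = 1) →
      γ ⟨0, by omega⟩ + γ ⟨1, by omega⟩ ≤ 1 := by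
    intro γ hγ hγs
    have h := Finset.sum_le_sum_of_subset_of_nonneg
      (Finset.subset_univ ({⟨0, by omega⟩, ⟨1, by omega⟩} : Finset (Fin n)))
      (fun i _ _ => (hγ i).le)
    rw [Finset.sum_pair h01, hγs] at h
    exact h
  have ha2 : 2 * a ≤ 1 := by
    have := hpair α hα hαs
    have h0 := ha_le ⟨0, by omega⟩
    have h1 := ha_le ⟨1, by omega⟩
    linarith
  have hb2 : 2 * b ≤ 1 := by
    have := hpair β hβ hβs
    have h0 := hb_le ⟨0, by omega⟩
    have h1 := hb_le ⟨1, by omega⟩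
    linarith
  have h1a : (0:ℝ) < 1 - a := by linarith
  have h1b : (0:ℝ) < 1 - b := by linarith
  set y : Fin n → ℝ := fun i => Real.sqrt (x i) with hy_def
  have hy : ∀ i, 0 ≤ y i := fun i => Real.sqrt_nonneg _
  have hxy : ∀ i, x i = y i * y i := fun i => (Real.mul_self_sqrt (hx i)).symm
  set A : ℝ := ∑ i, α i * y i with hA_def
  set B : ℝ := ∑ i, β i * y i with hB_def
  set Vβ : ℝ := ∑ i, β i * x i - B ^ 2 with hVβ_def
  set Vα : ℝ := ∑ i, α i * x i - A ^ 2 with hVα_def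
  set gapα : ℝ := ∑ i, α i * x i - ∏ i, x i ^ α i with hgapα_def
  set gapβ : ℝ := ∑ i, β i * x i - ∏ i, x i ^ β i with hgapβ_def
  -- variance comparison : c * Vβ ≤ Vα
  have hvar : c * Vβ ≤ Vα := by
    have e1 : ∑ i, α i * (y i - A) ^ 2 = Vα := by
      rw [hVα_def]
      rw [show ∑ i, α i * (y i - A) ^ 2
          = ∑ i, (α i * x i - 2 * A * (α i * y i) + A ^ 2 * α i) from
        Finset.sum_congr rfl fun i _ => by rw [hxy i]; ring]
      rw [Finset.sum_add_distrib, Finset.sum_sub_distrib, ← Finset.mul_sum,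
        ← Finset.mul_sum, hαs, ← hA_def]
      ring
    have e2 : ∑ i, β i * (y i - A) ^ 2 = Vβ + (A - B) ^ 2 := by
      rw [hVβ_def]
      rw [show ∑ i, β i * (y i - A) ^ 2
          = ∑ i, (β i * x i - 2 * A * (β i * y i) + A ^ 2 * β i) from
        Finset.sum_congr rfl fun i _ => by rw [hxy i]; ring]
      rw [Finset.sum_add_distrib, Finset.sum_sub_distrib, ← Finset.mul_sum,
        ← Finset.mul_sum, hβs, ← hB_def]
      ring
    have e3 : c * ∑ i, β i * (y i - A) ^ 2 ≤ ∑ i, α i * (y i - A) ^ 2 := by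
      rw [Finset.mul_sum]
      apply Finset.sum_le_sum
      intro i _
      calc c * (β i * (y i - A) ^ 2) = (c * β i) * (y i - A) ^ 2 := by ring
        _ ≤ α i * (y i - A) ^ 2 :=
          mul_le_mul_of_nonneg_right (hcb i) (sq_nonneg _)
    rw [e1, e2] at e3
    nlinarith [sq_nonneg (A - B)]
  have hcoreα : Vα ≤ (1 - a) * gapα :=
    amgm_core n x α hx hα hαs a ha0 ha_le ha2
  have hcoreβ : Vβ ≤ (1 - b) * gapβ :=
    amgm_core n x β hx hβ hβs b hb0 hb_le hb2
  have hdec : c * gapβ ≤ gapα :=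
    amgm_decomp n x α β hx hα hβ hαs hβs c hc0 hcb
  have hgapβ0 : 0 ≤ gapβ := by
    have hV0 : 0 ≤ Vβ := by
      have h := Finset.sum_nonneg
        (fun i (_ : i ∈ Finset.univ) => mul_nonneg (hβ i).le (sq_nonneg (y i - B)))
      have e2 : ∑ i, β i * (y i - B) ^ 2 = Vβ := by
        rw [hVβ_def]
        rw [show ∑ i, β i * (y i - B) ^ 2
            = ∑ i, (β i * x i - 2 * B * (β i * y i) + B ^ 2 * β i) from
          Finset.sum_congr rfl fun i _ => by rw [hxy i]; ring]
        rw [Finset.sum_add_distrib, Finset.sum_sub_distrib, ← Finset.mul_sum,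
          ← Finset.mul_sum, hβs, ← hB_def]
        ring
      linarith [e2 ▸ h]
    nlinarith [hcoreβ]
  -- two bounds
  have bound1 : c * (1 / (1 - a)) * Vβ ≤ gapα := by
    rw [show c * (1 / (1 - a)) * Vβ = (c * Vβ) / (1 - a) by ring, div_le_iff₀ h1a]
    nlinarith [hvar, hcoreα]
  have bound2 : c * (1 / (1 - b)) * Vβ ≤ gapα := by
    rw [show c * (1 / (1 - b)) * Vβ = (c * Vβ) / (1 - b) by ring, div_le_iff₀ h1b]
    have h1 : c * Vβ ≤ c * ((1 - b) * gapβ) := mul_le_mul_of_nonneg_left hcoreβ hc0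
    nlinarith [hdec]
  rcases max_choice (1 / (1 - a)) (1 / (1 - b)) with h | h <;> rw [h]
  · exact bound1
  · exact bound2
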